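/- Assume the 3D nozzle geometry N_ε = {(x₁, x₂, x₃) ∈ ℝ³ : 0 < x₁ < ε, 0 < x₂ < ε^l, γ(x₂) < x₃ < γ(x₂)+ε}, where ε ∈ (0,1), l > 0, l₀ = min(l, 1), and γ : [0, ε^l] → ℝ is C² with γ(0) = 0, γ′(0) = 0, sup|γ| ≤ ε. Let u₀ be the 3D CGO function with parameters μ, λ, s > 0 and unit vector d = (d₁, d₂, d₃), d₁, d₂, d₃ < 0, and assume 1 ≤ s, s·ε ≤ 1, and ε ≤ s·ε^l ≤ 1. Let T > 0, [T₁, T₂] ⊆ [0, T] with T₂ − T₁ = ε², α₄ ∈ (0, 1), C₄ > 0. Let w : N̄_ε × [T₁, T₂] → ℂ be continuously differentiable in (x, t), satisfy a parabolic C^{1,α₄} bound with constant C₄, and vanish on the lower face: w(x₁, x₂, γ(x₂), t) = 0 for all x₁ ∈ [0, ε], x₂ ∈ [0, ε^l], t ∈ [T₁, T₂]. Define I₁ = μ∫_{T₁}^{T₂}[ ∫_0^ε ∫_{γ(ε^l)}^{γ(ε^l)+ε} (w·∂₂u₀ − u₀·∂₂w)(x₁, ε^l, x₃, t) dx₃ dx₁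 − ∫_0^ε ∫_0^ε (w·∂₂u₀ − u₀·∂₂w)(x₁, 0, x₃, t) dx₃ dx₁ ] dt. Then there exists a constant C > 0, depending only on μ, λ, T and C₄ (in particular independent of ε, s, l, γ), such that |I₁| ≤ C·( s²ε^{4+l} + s²ε^{3+l+(1+α₄)l₀} + ε^{3+α₄ l₀} + s³ε^{4+2l} + s·ε^{4+α₄ l₀} ). -/

import Mathlib

noncomputable section

/-- Partial derivative in the first spatial variable. -/
def qd1 (f : ℝ → ℝ → ℝ → ℝ → ℂ) (x₁ x₂ x₃ t : ℝ) : ℂ := deriv (fun y => f y x₂ x₃ t) x₁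

/-- Partial derivative in the second spatial variable. -/
def qd2 (f : ℝ → ℝ → ℝ → ℝ → ℂ) (x₁ x₂ x₃ t : ℝ) : ℂ := deriv (fun y => f x₁ y x₃ t) x₂

/-- Partial derivative in the third spatial variable. -/
def qd3 (f : ℝ → ℝ → ℝ → ℝ → ℂ) (x₁ x₂ x₃ t : ℝ) : ℂ := deriv (fun y => f x₁ x₂ y t) x₃

/-- Partial derivative in time. -/
def qdt (f : ℝ → ℝ → ℝ → ℝ → ℂ) (x₁ x₂ x₃ t : ℝ) : ℂ := deriv (fun τ => f x₁ x₂ x₃ τ) t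

/-- Spatial Laplacian `Δ = ∂₁² + ∂₂² + ∂₃²`. -/
def lap3 (f : ℝ → ℝ → ℝ → ℝ → ℂ) (x₁ x₂ x₃ t : ℝ) : ℂ :=
  qd1 (qd1 f) x₁ x₂ x₃ t + qd2 (qd2 f) x₁ x₂ x₃ t + qd3 (qd3 f) x₁ x₂ x₃ t

/-- The 3D complex geometric optics function
`u₀(x,t) = exp(μ^{-1/2}((s d₁ + i√(s²+λ) d₂)x₁ + (s d₂ − i√(s²+λ) d₁)x₂ + s d₃ x₃) + λt)`. -/
def cgo3 (μ lam s d₁ d₂ d₃ : ℝ) (x₁ x₂ x₃ t : ℝ) : ℂ :=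
  Complex.exp (((Real.sqrt μ : ℝ) : ℂ)⁻¹ *
      (((s : ℂ) * (d₁ : ℂ) + Complex.I * ((Real.sqrt (s ^ 2 + lam) : ℝ) : ℂ) * (d₂ : ℂ)) *
          (x₁ : ℂ) +
        ((s : ℂ) * (d₂ : ℂ) - Complex.I * ((Real.sqrt (s ^ 2 + lam) : ℝ) : ℂ) * (d₁ : ℂ)) *
          (x₂ : ℂ) +
        (s : ℂ) * (d₃ : ℂ) * (x₃ : ℂ)) +
    (lam : ℂ) * (t : ℂ))

/-- The parabolic distance `ρ = ‖x − y‖ + |t − τ|^{1/2}` in three space dimensions. -/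
def prho3 (x₁ x₂ x₃ t y₁ y₂ y₃ τ : ℝ) : ℝ :=
  Real.sqrt ((x₁ - y₁) ^ 2 + (x₂ - y₂) ^ 2 + (x₃ - y₃) ^ 2) + Real.sqrt |t - τ|

/-- Euclidean norm of the spatial gradient of `w`. -/
def gradNorm3 (w : ℝ → ℝ → ℝ → ℝ → ℂ) (x₁ x₂ x₃ t : ℝ) : ℝ :=
  Real.sqrt (‖qd1 w x₁ x₂ x₃ t‖ ^ 2 + ‖qd2 w x₁ x₂ x₃ t‖ ^ 2 +
    ‖qd3 w x₁ x₂ x₃ t‖ ^ 2)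

/-- The closed 3D nozzle space–time cylinder `N̄_ε × [T₁,T₂]`, where
`N_ε = {0 < x₁ < ε, 0 < x₂ < ε^l, γ(x₂) < x₃ < γ(x₂)+ε}`. -/
def tubeCyl (ε l T₁ T₂ : ℝ) (γ : ℝ → ℝ) : Set (ℝ × ℝ × ℝ × ℝ) :=
  {p : ℝ × ℝ × ℝ × ℝ | p.1 ∈ Set.Icc 0 ε ∧ p.2.1 ∈ Set.Icc 0 (ε ^ l) ∧
    p.2.2.1 ∈ Set.Icc (γ p.2.1) (γ p.2.1 + ε) ∧ p.2.2.2 ∈ Set.Icc T₁ T₂}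

/-- Parabolic `C^{1,α}` bound with constant `C` on the set `S` (three space dimensions). -/
structure ParabolicC1₃ (w : ℝ → ℝ → ℝ → ℝ → ℂ) (S : Set (ℝ × ℝ × ℝ × ℝ)) (C α : ℝ) : Prop where
  bdd : ∀ p ∈ S, ‖w p.1 p.2.1 p.2.2.1 p.2.2.2‖ ≤ C
  grad_bdd : ∀ p ∈ S, gradNorm3 w p.1 p.2.1 p.2.2.1 p.2.2.2 ≤ C
  time_bdd : ∀ p ∈ S, ‖qdt w p.1 p.2.1 p.2.2.1 p.2.2.2‖ ≤ C
  lip : ∀ p ∈ S, ∀ q ∈ S,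
    ‖w p.1 p.2.1 p.2.2.1 p.2.2.2 - w q.1 q.2.1 q.2.2.1 q.2.2.2‖ ≤
      C * prho3 p.1 p.2.1 p.2.2.1 p.2.2.2 q.1 q.2.1 q.2.2.1 q.2.2.2
  grad_holder : ∀ p ∈ S, ∀ q ∈ S,
    Real.sqrt
        (‖qd1 w p.1 p.2.1 p.2.2.1 p.2.2.2 - qd1 w q.1 q.2.1 q.2.2.1 q.2.2.2‖ ^ 2 +
          ‖qd2 w p.1 p.2.1 p.2.2.1 p.2.2.2 - qd2 w q.1 q.2.1 q.2.2.1 q.2.2.2‖ ^ 2 +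
          ‖qd3 w p.1 p.2.1 p.2.2.1 p.2.2.2 - qd3 w q.1 q.2.1 q.2.2.1 q.2.2.2‖ ^ 2) ≤
      C * prho3 p.1 p.2.1 p.2.2.1 p.2.2.2 q.1 q.2.1 q.2.2.1 q.2.2.2 ^ α
  taylor : ∀ p ∈ S, ∀ q ∈ S,
    ‖w p.1 p.2.1 p.2.2.1 p.2.2.2 - w q.1 q.2.1 q.2.2.1 q.2.2.2
        - qd1 w q.1 q.2.1 q.2.2.1 q.2.2.2 * ((p.1 - q.1 : ℝ) : ℂ)
        - qd2 w q.1 q.2.1 q.2.2.1 q.2.2.2 * ((p.2.1 - q.2.1 : ℝ) : ℂ)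
        - qd3 w q.1 q.2.1 q.2.2.1 q.2.2.2 * ((p.2.2.1 - q.2.2.1 : ℝ) : ℂ)
        - qdt w q.1 q.2.1 q.2.2.1 q.2.2.2 * ((p.2.2.2 - q.2.2.2 : ℝ) : ℂ)‖ ≤
      C * prho3 p.1 p.2.1 p.2.2.1 p.2.2.2 q.1 q.2.1 q.2.2.1 q.2.2.2 ^ (1 + α)

/-- `w` is (jointly) continuously differentiable in `(x,t)` on the set `S`. -/
structure SmoothC1₃ (w : ℝ → ℝ → ℝ → ℝ → ℂ) (S : Set (ℝ × ℝ × ℝ × ℝ)) : Prop where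
  cont : ContinuousOn (fun p : ℝ × ℝ × ℝ × ℝ => w p.1 p.2.1 p.2.2.1 p.2.2.2) S
  jdiff : ∀ p ∈ S,
    DifferentiableAt ℝ (fun q : ℝ × ℝ × ℝ × ℝ => w q.1 q.2.1 q.2.2.1 q.2.2.2) p
  cont1 : ContinuousOn (fun p : ℝ × ℝ × ℝ × ℝ => qd1 w p.1 p.2.1 p.2.2.1 p.2.2.2) S
  cont2 : ContinuousOn (fun p : ℝ × ℝ × ℝ × ℝ => qd2 w p.1 p.2.1 p.2.2.1 p.2.2.2) S
  cont3 : ContinuousOn (fun p : ℝ × ℝ × ℝ × ℝ => qd3 w p.1 p.2.1 p.2.2.1 p.2.2.2) S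
  contt : ContinuousOn (fun p : ℝ × ℝ × ℝ × ℝ => qdt w p.1 p.2.1 p.2.2.1 p.2.2.2) S

/-- `w` is continuous on `S`, (jointly) continuously differentiable in `(x,t)`,
and twice continuously differentiable in the space variables on `S`. -/
structure SmoothC2x₃ (w : ℝ → ℝ → ℝ → ℝ → ℂ) (S : Set (ℝ × ℝ × ℝ × ℝ)) : Prop where
  cont : ContinuousOn (fun p : ℝ × ℝ × ℝ × ℝ => w p.1 p.2.1 p.2.2.1 p.2.2.2) S
  jdiff : ∀ p ∈ S,
    DifferentiableAt ℝ (fun q : ℝ × ℝ × ℝ × ℝ => w q.1 q.2.1 q.2.2.1 q.2.2.2) p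
  d11 : ∀ p ∈ S, DifferentiableAt ℝ (fun y => qd1 w y p.2.1 p.2.2.1 p.2.2.2) p.1
  d22 : ∀ p ∈ S, DifferentiableAt ℝ (fun y => qd2 w p.1 y p.2.2.1 p.2.2.2) p.2.1
  d33 : ∀ p ∈ S, DifferentiableAt ℝ (fun y => qd3 w p.1 p.2.1 y p.2.2.2) p.2.2.1
  cont1 : ContinuousOn (fun p : ℝ × ℝ × ℝ × ℝ => qd1 w p.1 p.2.1 p.2.2.1 p.2.2.2) S
  cont2 : ContinuousOn (fun p : ℝ × ℝ × ℝ × ℝ => qd2 w p.1 p.2.1 p.2.2.1 p.2.2.2) S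
  cont3 : ContinuousOn (fun p : ℝ × ℝ × ℝ × ℝ => qd3 w p.1 p.2.1 p.2.2.1 p.2.2.2) S
  contt : ContinuousOn (fun p : ℝ × ℝ × ℝ × ℝ => qdt w p.1 p.2.1 p.2.2.1 p.2.2.2) S
  cont11 : ContinuousOn (fun p : ℝ × ℝ × ℝ × ℝ => qd1 (qd1 w) p.1 p.2.1 p.2.2.1 p.2.2.2) S
  cont22 : ContinuousOn (fun p : ℝ × ℝ × ℝ × ℝ => qd2 (qd2 w) p.1 p.2.1 p.2.2.1 p.2.2.2) S
  cont33 : ContinuousOn (fun p : ℝ × ℝ × ℝ × ℝ => qd3 (qd3 w) p.1 p.2.1 p.2.2.1 p.2.2.2) S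

/-- `f` is continuous on `S` and continuously differentiable in the space variables. -/
structure SpaceC1x₃ (f : ℝ → ℝ → ℝ → ℝ → ℂ) (S : Set (ℝ × ℝ × ℝ × ℝ)) : Prop where
  cont : ContinuousOn (fun p : ℝ × ℝ × ℝ × ℝ => f p.1 p.2.1 p.2.2.1 p.2.2.2) S
  d1 : ∀ p ∈ S, DifferentiableAt ℝ (fun y => f y p.2.1 p.2.2.1 p.2.2.2) p.1
  d2 : ∀ p ∈ S, DifferentiableAt ℝ (fun y => f p.1 y p.2.2.1 p.2.2.2) p.2.1
  d3 : ∀ p ∈ S, DifferentiableAt ℝ (fun y => f p.1 p.2.1 y p.2.2.2) p.2.2.1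
  cont1 : ContinuousOn (fun p : ℝ × ℝ × ℝ × ℝ => qd1 f p.1 p.2.1 p.2.2.1 p.2.2.2) S
  cont2 : ContinuousOn (fun p : ℝ × ℝ × ℝ × ℝ => qd2 f p.1 p.2.1 p.2.2.1 p.2.2.2) S
  cont3 : ContinuousOn (fun p : ℝ × ℝ × ℝ × ℝ => qd3 f p.1 p.2.1 p.2.2.1 p.2.2.2) S

/-- The admissible source class in 3D: `f(x,t,z,p)` is bounded by `C` and Hölder continuous
with constant `C`, exponent `α` in the spatial, state and gradient arguments and
exponent `α/2` in time. -/
structure SourceClass₃ (C α : ℝ) (f : ℝ → ℝ → ℝ → ℝ → ℂ → ℂ × ℂ × ℂ → ℂ) : Prop where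
  bdd : ∀ x₁ x₂ x₃ t z p, ‖f x₁ x₂ x₃ t z p‖ ≤ C
  space : ∀ x₁ x₂ x₃ x₁' x₂' x₃' t z p,
    ‖f x₁ x₂ x₃ t z p - f x₁' x₂' x₃' t z p‖ ≤
      C * Real.sqrt ((x₁ - x₁') ^ 2 + (x₂ - x₂') ^ 2 + (x₃ - x₃') ^ 2) ^ α
  time : ∀ x₁ x₂ x₃ t t' z p,
    ‖f x₁ x₂ x₃ t z p - f x₁ x₂ x₃ t' z p‖ ≤ C * |t - t'| ^ (α / 2)
  state : ∀ x₁ x₂ x₃ t z z' p,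
    ‖f x₁ x₂ x₃ t z p - f x₁ x₂ x₃ t z' p‖ ≤ C * ‖z - z'‖ ^ α
  grad : ∀ x₁ x₂ x₃ t z p p',
    ‖f x₁ x₂ x₃ t z p - f x₁ x₂ x₃ t z p'‖ ≤
      C * Real.sqrt (‖p.1 - p'.1‖ ^ 2 + ‖p.2.1 - p'.2.1‖ ^ 2 +
          ‖p.2.2 - p'.2.2‖ ^ 2) ^ α

/-- The admissible flux-component class in 3D: `F(x,t,z)` is bounded by `C` and Hölder
continuous with constant `C`, exponent `α` in space and state and `α/2` in time. -/
structure FluxClass₃ (C α : ℝ) (F : ℝ → ℝ → ℝ → ℝ → ℂ → ℂ) : Prop where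
  bdd : ∀ x₁ x₂ x₃ t z, ‖F x₁ x₂ x₃ t z‖ ≤ C
  space : ∀ x₁ x₂ x₃ x₁' x₂' x₃' t z,
    ‖F x₁ x₂ x₃ t z - F x₁' x₂' x₃' t z‖ ≤
      C * Real.sqrt ((x₁ - x₁') ^ 2 + (x₂ - x₂') ^ 2 + (x₃ - x₃') ^ 2) ^ α
  time : ∀ x₁ x₂ x₃ t t' z,
    ‖F x₁ x₂ x₃ t z - F x₁ x₂ x₃ t' z‖ ≤ C * |t - t'| ^ (α / 2)
  state : ∀ x₁ x₂ x₃ t z z',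
    ‖F x₁ x₂ x₃ t z - F x₁ x₂ x₃ t z'‖ ≤ C * ‖z - z'‖ ^ α

/-- The derivative of the nozzle curve `γ` (within `[0, ε^l]`). -/
def gammaD3 (ε l : ℝ) (γ : ℝ → ℝ) (x₂ : ℝ) : ℝ := derivWithin γ (Set.Icc 0 (ε ^ l)) x₂

/-- Normalisation factor `√(1 + γ′(x₂)²)` for the unit normal of a graph boundary. -/
def nrmγ3 (ε l : ℝ) (γ : ℝ → ℝ) (x₂ : ℝ) : ℝ := Real.sqrt (1 + gammaD3 ε l γ x₂ ^ 2)

open Classical in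
/-- The recovery exponent `τ` of the main theorem, with `a = α₃ α₄`. -/
def tauExp (l a : ℝ) : ℝ :=
  if l ≤ 1 / (1 + a) then a * l
  else if l < 1 then (1 - l * (1 - a)) / 2
  else (1 - l + a) / 2

/-- Modulus of the 3D CGO function. -/
lemma cgo3_abs (μ lam s d₁ d₂ d₃ x₁ x₂ x₃ t : ℝ) :
    ‖cgo3 μ lam s d₁ d₂ d₃ x₁ x₂ x₃ t‖ =
      Real.exp ((Real.sqrt μ)⁻¹ * (s * d₁ * x₁ + s * d₂ * x₂ + s * d₃ * x₃) + lam * t) := by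
  unfold cgo3
  rw [Complex.norm_exp]
  congr 1
  have h : (((Real.sqrt μ : ℝ) : ℂ))⁻¹ *
      (((s : ℂ) * (d₁ : ℂ) + Complex.I * ((Real.sqrt (s ^ 2 + lam) : ℝ) : ℂ) * (d₂ : ℂ)) * (x₁ : ℂ) +
        ((s : ℂ) * (d₂ : ℂ) - Complex.I * ((Real.sqrt (s ^ 2 + lam) : ℝ) : ℂ) * (d₁ : ℂ)) * (x₂ : ℂ) +
        (s : ℂ) * (d₃ : ℂ) * (x₃ : ℂ)) + (lam : ℂ) * (t : ℂ)
      = Complex.ofReal ((Real.sqrt μ)⁻¹ * (s * d₁ * x₁ + s * d₂ * x₂ + s * d₃ * x₃) + lam * t)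
        + Complex.I * Complex.ofReal ((Real.sqrt μ)⁻¹ *
            (Real.sqrt (s ^ 2 + lam) * d₂ * x₁ - Real.sqrt (s ^ 2 + lam) * d₁ * x₂)) := by
    push_cast; ring
  rw [h]; simp

/-- The `x₂`-derivative of the 3D CGO function. -/
lemma qd2_cgo3 (μ lam s d₁ d₂ d₃ x₁ x₂ x₃ t : ℝ) :
    qd2 (cgo3 μ lam s d₁ d₂ d₃) x₁ x₂ x₃ t =
      ((Real.sqrt μ : ℝ) : ℂ)⁻¹ *
        ((s : ℂ) * (d₂ : ℂ) - Complex.I * ((Real.sqrt (s ^ 2 + lam) : ℝ) : ℂ) * (d₁ : ℂ)) *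
        cgo3 μ lam s d₁ d₂ d₃ x₁ x₂ x₃ t := by
  set c : ℂ := ((Real.sqrt μ : ℝ) : ℂ)⁻¹
  set P : ℂ := ((s : ℂ) * (d₁ : ℂ) + Complex.I * ((Real.sqrt (s ^ 2 + lam) : ℝ) : ℂ) * (d₂ : ℂ))
  set Q : ℂ := ((s : ℂ) * (d₂ : ℂ) - Complex.I * ((Real.sqrt (s ^ 2 + lam) : ℝ) : ℂ) * (d₁ : ℂ))
  have h1 : HasDerivAt (fun y : ℝ => (y : ℂ)) 1 x₂ := by
    simpa using (hasDerivAt_id x₂).ofReal_comp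
  have h2 : HasDerivAt (fun y : ℝ => Q * (y : ℂ)) Q x₂ := by simpa using h1.const_mul Q
  have h3 : HasDerivAt (fun y : ℝ => P * (x₁:ℂ) + Q * (y:ℂ) + (s:ℂ)*(d₃:ℂ)*(x₃:ℂ)) Q x₂ :=
    (h2.const_add _).add_const _
  have h4 : HasDerivAt (fun y : ℝ => c * (P * (x₁:ℂ) + Q * (y:ℂ) + (s:ℂ)*(d₃:ℂ)*(x₃:ℂ)))
      (c * Q) x₂ := h3.const_mul c
  have h5 := (h4.add_const ((lam:ℂ)*(t:ℂ))).cexp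
  have h6 : qd2 (cgo3 μ lam s d₁ d₂ d₃) x₁ x₂ x₃ t
      = Complex.exp (c * (P * (x₁:ℂ) + Q * (x₂:ℂ) + (s:ℂ)*(d₃:ℂ)*(x₃:ℂ)) + (lam:ℂ)*(t:ℂ))
        * (c * Q) := h5.deriv
  rw [h6]; unfold cgo3; ring

set_option maxHeartbeats 1000000 in
/-- Uniform pointwise bound for the boundary integrand on a cross-section `x₂ = x₂v`. -/
lemma integrand_bound3 (μ lam T C₄ α₄ ε l s d₁ d₂ d₃ T₁ T₂ : ℝ) (γ : ℝ → ℝ)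
    (w : ℝ → ℝ → ℝ → ℝ → ℂ)
    (hμ : 0 < μ) (hlam : 0 < lam) (hε : 0 < ε) (hs : 1 ≤ s) (hsε : s * ε ≤ 1)
    (hd1 : d₁ < 0) (hd2 : d₂ < 0) (hd3 : d₃ < 0) (hd : d₁ ^ 2 + d₂ ^ 2 + d₃ ^ 2 = 1)
    (hT1 : 0 ≤ T₁) (hT2 : T₂ ≤ T)
    (hpar : ParabolicC1₃ w (tubeCyl ε l T₁ T₂ γ) C₄ α₄)
    (hC₄ : 0 ≤ C₄)
    (x₁ x₂v x₃ t : ℝ)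
    (hx₁ : x₁ ∈ Set.Icc (0:ℝ) ε) (hx₂ : x₂v ∈ Set.Icc (0:ℝ) (ε ^ l))
    (hx₃ : x₃ ∈ Set.Icc (γ x₂v) (γ x₂v + ε)) (ht : t ∈ Set.Icc T₁ T₂)
    (hγb : |γ x₂v| ≤ ε)
    (hw0 : w x₁ x₂v (γ x₂v) t = 0) :
    ‖w x₁ x₂v x₃ t * qd2 (cgo3 μ lam s d₁ d₂ d₃) x₁ x₂v x₃ t
        - cgo3 μ lam s d₁ d₂ d₃ x₁ x₂v x₃ t * qd2 w x₁ x₂v x₃ t‖ ≤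
      C₄ * Real.exp ((Real.sqrt μ)⁻¹ + lam * T) *
        ((Real.sqrt μ)⁻¹ * (2 + Real.sqrt lam) * s * ε + 1) := by
  have hcpos : 0 < Real.sqrt μ := Real.sqrt_pos.mpr hμ
  have hspos : 0 < s := lt_of_lt_of_le one_pos hs
  have hγl : -ε ≤ γ x₂v := (abs_le.mp hγb).1
  have hγu : γ x₂v ≤ ε := (abs_le.mp hγb).2
  set K₀ : ℝ := Real.exp ((Real.sqrt μ)⁻¹ + lam * T) with hK₀
  set K₁ : ℝ := (Real.sqrt μ)⁻¹ * (2 + Real.sqrt lam) with hK₁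
  have hK₀pos : 0 < K₀ := Real.exp_pos _
  have hK₁pos : 0 < K₁ := by positivity
  have hp : (x₁, x₂v, x₃, t) ∈ tubeCyl ε l T₁ T₂ γ := ⟨hx₁, hx₂, hx₃, ht⟩
  have hq : (x₁, x₂v, γ x₂v, t) ∈ tubeCyl ε l T₁ T₂ γ :=
    ⟨hx₁, hx₂, ⟨le_rfl, by linarith⟩, ht⟩
  -- bound on w
  have hlip := hpar.lip (x₁, x₂v, x₃, t) hp (x₁, x₂v, γ x₂v, t) hq
  dsimp only at hlip
  rw [hw0, sub_zero] at hlip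
  have hrho : prho3 x₁ x₂v x₃ t x₁ x₂v (γ x₂v) t ≤ ε := by
    have hre : prho3 x₁ x₂v x₃ t x₁ x₂v (γ x₂v) t = |x₃ - γ x₂v| := by
      simp [prho3, sub_self, Real.sqrt_sq_eq_abs]
    rw [hre]
    rw [abs_le]
    constructor <;> [linarith [hx₃.1]; linarith [hx₃.2]]
  have hw : ‖w x₁ x₂v x₃ t‖ ≤ C₄ * ε :=
    hlip.trans (mul_le_mul_of_nonneg_left hrho hC₄)
  -- bound on u₀
  have hd3' : -d₃ ≤ 1 := by nlinarith [sq_nonneg d₁, sq_nonneg d₂, sq_nonneg (d₃ + 1)]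
  have habsu : ‖cgo3 μ lam s d₁ d₂ d₃ x₁ x₂v x₃ t‖ ≤ K₀ := by
    rw [cgo3_abs, hK₀]
    apply Real.exp_le_exp.mpr
    have h1 : s * d₁ * x₁ ≤ 0 := by nlinarith [mul_nonneg (mul_nonneg hspos.le (neg_nonneg.2 hd1.le)) hx₁.1]
    have h2 : s * d₂ * x₂v ≤ 0 := by nlinarith [mul_nonneg (mul_nonneg hspos.le (neg_nonneg.2 hd2.le)) hx₂.1]
    have e1 : d₃ * x₃ ≤ (-d₃) * ε := by
      nlinarith [mul_nonneg (neg_nonneg.2 hd3.le) (show (0:ℝ) ≤ x₃ + ε by linarith [hx₃.1])]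
    have e2 : s * (d₃ * x₃) ≤ s * ((-d₃) * ε) := mul_le_mul_of_nonneg_left e1 hspos.le
    have e3 : (-d₃) * ε ≤ ε := by nlinarith
    have e4 : s * ((-d₃) * ε) ≤ s * ε := mul_le_mul_of_nonneg_left e3 hspos.le
    have h3 : s * d₃ * x₃ ≤ 1 := by rw [mul_assoc]; linarith
    have hsum : s * d₁ * x₁ + s * d₂ * x₂v + s * d₃ * x₃ ≤ 1 := by linarith
    have h4 : (Real.sqrt μ)⁻¹ * (s * d₁ * x₁ + s * d₂ * x₂v + s * d₃ * x₃) ≤ (Real.sqrt μ)⁻¹ := by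
      have := mul_le_mul_of_nonneg_left hsum (inv_nonneg.mpr hcpos.le)
      simpa using this
    have h5 : lam * t ≤ lam * T := by
      apply mul_le_mul_of_nonneg_left _ hlam.le
      linarith [ht.2]
    linarith
  -- bound on ∂₂u₀
  have hd1' : |d₁| ≤ 1 := by nlinarith [sq_nonneg d₂, sq_nonneg d₃, abs_nonneg d₁, sq_abs d₁]
  have hd2' : |d₂| ≤ 1 := by nlinarith [sq_nonneg d₁, sq_nonneg d₃, abs_nonneg d₂, sq_abs d₂]
  have hr : Real.sqrt (s ^ 2 + lam) ≤ s + Real.sqrt lam := by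
    have h2 : (Real.sqrt (s ^ 2 + lam)) ^ 2 = s ^ 2 + lam := Real.sq_sqrt (by positivity)
    have h3 : (Real.sqrt lam) ^ 2 = lam := Real.sq_sqrt hlam.le
    nlinarith [Real.sqrt_nonneg (s ^ 2 + lam), Real.sqrt_nonneg lam]
  have hbeta : ‖((Real.sqrt μ : ℝ) : ℂ)⁻¹ *
      ((s : ℂ) * (d₂ : ℂ) - Complex.I * ((Real.sqrt (s ^ 2 + lam) : ℝ) : ℂ) * (d₁ : ℂ))‖ ≤
      K₁ * s := by
    rw [norm_mul, norm_inv, Complex.norm_real, Real.norm_eq_abs, abs_of_pos hcpos]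
    have hQ : ‖(s : ℂ) * (d₂ : ℂ) -
        Complex.I * ((Real.sqrt (s ^ 2 + lam) : ℝ) : ℂ) * (d₁ : ℂ)‖ ≤ (2 + Real.sqrt lam) * s := by
      have htri : ‖(s : ℂ) * (d₂ : ℂ) -
          Complex.I * ((Real.sqrt (s ^ 2 + lam) : ℝ) : ℂ) * (d₁ : ℂ)‖ ≤
          ‖(s : ℂ) * (d₂ : ℂ)‖ +
          ‖Complex.I * ((Real.sqrt (s ^ 2 + lam) : ℝ) : ℂ) * (d₁ : ℂ)‖ := by
        exact norm_sub_le ((s : ℂ) * (d₂ : ℂ))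
          (Complex.I * ((Real.sqrt (s ^ 2 + lam) : ℝ) : ℂ) * (d₁ : ℂ))
      have h1 : ‖(s : ℂ) * (d₂ : ℂ)‖ ≤ s := by
        rw [norm_mul, Complex.norm_real, Complex.norm_real, Real.norm_eq_abs, Real.norm_eq_abs, abs_of_pos hspos]
        nlinarith [abs_nonneg d₂]
      have h2 : ‖Complex.I * ((Real.sqrt (s ^ 2 + lam) : ℝ) : ℂ) * (d₁ : ℂ)‖ ≤
          s + Real.sqrt lam := by
        rw [norm_mul, norm_mul, Complex.norm_I, one_mul, Complex.norm_real, Complex.norm_real,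
          Real.norm_eq_abs, Real.norm_eq_abs,
          abs_of_nonneg (Real.sqrt_nonneg _)]
        nlinarith [Real.sqrt_nonneg (s ^ 2 + lam), abs_nonneg d₁]
      have h3 : s + (s + Real.sqrt lam) ≤ (2 + Real.sqrt lam) * s := by
        nlinarith [Real.sqrt_nonneg lam]
      linarith
    refine le_trans (mul_le_mul_of_nonneg_left hQ (inv_nonneg.mpr hcpos.le)) (le_of_eq ?_)
    rw [hK₁]; ring
  have hqd2u : ‖qd2 (cgo3 μ lam s d₁ d₂ d₃) x₁ x₂v x₃ t‖ ≤ K₁ * s * K₀ := by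
    rw [qd2_cgo3, norm_mul]
    exact mul_le_mul hbeta habsu (norm_nonneg _) (by positivity)
  -- bound on ∂₂w
  have hqd2w : ‖qd2 w x₁ x₂v x₃ t‖ ≤ C₄ := by
    have hg := hpar.grad_bdd (x₁, x₂v, x₃, t) hp
    dsimp only at hg
    unfold gradNorm3 at hg
    have hsq : ‖qd2 w x₁ x₂v x₃ t‖ ^ 2 ≤
        ‖qd1 w x₁ x₂v x₃ t‖ ^ 2 + ‖qd2 w x₁ x₂v x₃ t‖ ^ 2 +
          ‖qd3 w x₁ x₂v x₃ t‖ ^ 2 := by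
      nlinarith [sq_nonneg (‖qd1 w x₁ x₂v x₃ t‖),
        sq_nonneg (‖qd3 w x₁ x₂v x₃ t‖)]
    have hle : Real.sqrt (‖qd2 w x₁ x₂v x₃ t‖ ^ 2) ≤
        Real.sqrt (‖qd1 w x₁ x₂v x₃ t‖ ^ 2 + ‖qd2 w x₁ x₂v x₃ t‖ ^ 2 +
          ‖qd3 w x₁ x₂v x₃ t‖ ^ 2) := Real.sqrt_le_sqrt hsq
    rw [Real.sqrt_sq (norm_nonneg _)] at hle
    exact hle.trans hg
  -- combine
  have htri : ‖w x₁ x₂v x₃ t * qd2 (cgo3 μ lam s d₁ d₂ d₃) x₁ x₂v x₃ t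
      - cgo3 μ lam s d₁ d₂ d₃ x₁ x₂v x₃ t * qd2 w x₁ x₂v x₃ t‖ ≤
      ‖w x₁ x₂v x₃ t‖ * ‖qd2 (cgo3 μ lam s d₁ d₂ d₃) x₁ x₂v x₃ t‖
      + ‖cgo3 μ lam s d₁ d₂ d₃ x₁ x₂v x₃ t‖ * ‖qd2 w x₁ x₂v x₃ t‖ := by
    rw [← norm_mul, ← norm_mul]
    exact norm_sub_le
      (w x₁ x₂v x₃ t * qd2 (cgo3 μ lam s d₁ d₂ d₃) x₁ x₂v x₃ t)
      (cgo3 μ lam s d₁ d₂ d₃ x₁ x₂v x₃ t * qd2 w x₁ x₂v x₃ t)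
  have step1 : ‖w x₁ x₂v x₃ t‖ *
      ‖qd2 (cgo3 μ lam s d₁ d₂ d₃) x₁ x₂v x₃ t‖ ≤ (C₄ * ε) * (K₁ * s * K₀) :=
    mul_le_mul hw hqd2u (norm_nonneg _) (by positivity)
  have step2 : ‖cgo3 μ lam s d₁ d₂ d₃ x₁ x₂v x₃ t‖ *
      ‖qd2 w x₁ x₂v x₃ t‖ ≤ K₀ * C₄ :=
    mul_le_mul habsu hqd2w (norm_nonneg _) hK₀pos.le
  have : (C₄ * ε) * (K₁ * s * K₀) + K₀ * C₄ = C₄ * K₀ * (K₁ * s * ε + 1) := by ring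
  linarith [htri, step1, step2]


set_option maxHeartbeats 1000000 in
/-- **Three-dimensional boundary-term estimate (Lemma 4.1).**
`I₁` is the CGO-weighted integral over the two interior cross-sections
`Ω_ε = {x₂ = 0}` and `Ω_ε′ = {x₂ = ε^l}` of the thin 3D nozzle; if `w` is `C¹` in `(x,t)`,
satisfies the parabolic `C^{1,α₄}` bound with constant `C₄` and vanishes on the lower
face `x₃ = γ(x₂)`, then
`|I₁| ≤ C (s²ε^{4+l} + s²ε^{3+l+(1+α₄)l₀} + ε^{3+α₄l₀} + s³ε^{4+2l} + s ε^{4+α₄l₀})`,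
with `C` depending only on `μ, λ, T, C₄`. -/
theorem boundary_term_estimate_I1_3d
    (μ lam T C₄ α₄ : ℝ) (hμ : 0 < μ) (hlam : 0 < lam) (hT : 0 < T)
    (hC₄ : 0 < C₄) (hα₄ : α₄ ∈ Set.Ioo (0:ℝ) 1) :
    ∃ C > 0, ∀ (ε l s d₁ d₂ d₃ T₁ T₂ : ℝ) (γ : ℝ → ℝ) (w : ℝ → ℝ → ℝ → ℝ → ℂ),
      ε ∈ Set.Ioo (0:ℝ) 1 → 0 < l →
      ContDiffOn ℝ 2 γ (Set.Icc 0 (ε ^ l)) → γ 0 = 0 →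
      derivWithin γ (Set.Icc 0 (ε ^ l)) 0 = 0 →
      (∀ x ∈ Set.Icc (0:ℝ) (ε ^ l), |γ x| ≤ ε) →
      d₁ < 0 → d₂ < 0 → d₃ < 0 → d₁ ^ 2 + d₂ ^ 2 + d₃ ^ 2 = 1 →
      1 ≤ s → s * ε ≤ 1 → ε ≤ s * ε ^ l → s * ε ^ l ≤ 1 →
      0 ≤ T₁ → T₂ ≤ T → T₂ - T₁ = ε ^ 2 →
      SmoothC1₃ w (tubeCyl ε l T₁ T₂ γ) →
      ParabolicC1₃ w (tubeCyl ε l T₁ T₂ γ) C₄ α₄ →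
      (∀ x₁ ∈ Set.Icc (0:ℝ) ε, ∀ x₂ ∈ Set.Icc (0:ℝ) (ε ^ l), ∀ t ∈ Set.Icc T₁ T₂,
        w x₁ x₂ (γ x₂) t = 0) →
      ‖(μ : ℂ) * ∫ t in T₁..T₂,
          ((∫ x₁ in (0:ℝ)..ε, ∫ x₃ in (γ (ε ^ l))..(γ (ε ^ l) + ε),
              (w x₁ (ε ^ l) x₃ t * qd2 (cgo3 μ lam s d₁ d₂ d₃) x₁ (ε ^ l) x₃ t
                - cgo3 μ lam s d₁ d₂ d₃ x₁ (ε ^ l) x₃ t * qd2 w x₁ (ε ^ l) x₃ t))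
            - ∫ x₁ in (0:ℝ)..ε, ∫ x₃ in (0:ℝ)..ε,
              (w x₁ 0 x₃ t * qd2 (cgo3 μ lam s d₁ d₂ d₃) x₁ 0 x₃ t
                - cgo3 μ lam s d₁ d₂ d₃ x₁ 0 x₃ t * qd2 w x₁ 0 x₃ t))‖
        ≤ C * (s ^ 2 * ε ^ (4 + l) + s ^ 2 * ε ^ (3 + l + (1 + α₄) * min l 1)
            + ε ^ (3 + α₄ * min l 1) + s ^ 3 * ε ^ (4 + 2 * l)
            + s * ε ^ (4 + α₄ * min l 1)) := by
  obtain ⟨hα₄0, hα₄1⟩ := hα₄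
  have hcpos : 0 < Real.sqrt μ := Real.sqrt_pos.mpr hμ
  set K₀ : ℝ := Real.exp ((Real.sqrt μ)⁻¹ + lam * T) with hK₀
  set K₁ : ℝ := (Real.sqrt μ)⁻¹ * (2 + Real.sqrt lam) with hK₁
  have hK₀pos : 0 < K₀ := Real.exp_pos _
  have hK₁pos : 0 < K₁ := by positivity
  refine ⟨2 * μ * C₄ * K₀ * (K₁ + 1), by positivity, ?_⟩
  intro ε l s d₁ d₂ d₃ T₁ T₂ γ w hεmem hl hγC2 hγ0 hγ'0 hγsup hd1 hd2 hd3 hd hs hsε hεsl hsl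
    hT₁ hT₂ hT₂T₁ hsm hpar hbd
  obtain ⟨hε, hε1⟩ := hεmem
  have hspos : 0 < s := lt_of_lt_of_le one_pos hs
  have hεlpos : 0 < ε ^ l := Real.rpow_pos_of_pos hε l
  have hT₁₂ : T₁ ≤ T₂ := by nlinarith
  set B : ℝ := C₄ * K₀ * (K₁ * s * ε + 1) with hB
  have hBpos : 0 < B := by positivity
  -- bound the time-slice integrand
  have hface : ∀ t ∈ Set.uIoc T₁ T₂,
      ‖(∫ x₁ in (0:ℝ)..ε, ∫ x₃ in (γ (ε ^ l))..(γ (ε ^ l) + ε),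
          (w x₁ (ε ^ l) x₃ t * qd2 (cgo3 μ lam s d₁ d₂ d₃) x₁ (ε ^ l) x₃ t
            - cgo3 μ lam s d₁ d₂ d₃ x₁ (ε ^ l) x₃ t * qd2 w x₁ (ε ^ l) x₃ t))
        - ∫ x₁ in (0:ℝ)..ε, ∫ x₃ in (0:ℝ)..ε,
          (w x₁ 0 x₃ t * qd2 (cgo3 μ lam s d₁ d₂ d₃) x₁ 0 x₃ t
            - cgo3 μ lam s d₁ d₂ d₃ x₁ 0 x₃ t * qd2 w x₁ 0 x₃ t)‖ ≤ 2 * B * ε ^ 2 := by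
    intro t ht
    rw [Set.uIoc_of_le hT₁₂] at ht
    have htIcc : t ∈ Set.Icc T₁ T₂ := ⟨ht.1.le, ht.2⟩
    have hfl : ‖∫ x₁ in (0:ℝ)..ε, ∫ x₃ in (γ (ε ^ l))..(γ (ε ^ l) + ε),
        (w x₁ (ε ^ l) x₃ t * qd2 (cgo3 μ lam s d₁ d₂ d₃) x₁ (ε ^ l) x₃ t
          - cgo3 μ lam s d₁ d₂ d₃ x₁ (ε ^ l) x₃ t * qd2 w x₁ (ε ^ l) x₃ t)‖
        ≤ (B * ε) * |ε - 0| := by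
      apply intervalIntegral.norm_integral_le_of_norm_le_const
      intro x₁ hx₁
      rw [Set.uIoc_of_le hε.le] at hx₁
      have hx₁' : x₁ ∈ Set.Icc (0:ℝ) ε := ⟨hx₁.1.le, hx₁.2⟩
      have hinner : ‖∫ x₃ in (γ (ε ^ l))..(γ (ε ^ l) + ε),
          (w x₁ (ε ^ l) x₃ t * qd2 (cgo3 μ lam s d₁ d₂ d₃) x₁ (ε ^ l) x₃ t
            - cgo3 μ lam s d₁ d₂ d₃ x₁ (ε ^ l) x₃ t * qd2 w x₁ (ε ^ l) x₃ t)‖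
          ≤ B * |γ (ε ^ l) + ε - γ (ε ^ l)| := by
        apply intervalIntegral.norm_integral_le_of_norm_le_const
        intro x₃ hx₃
        rw [Set.uIoc_of_le (by linarith : γ (ε ^ l) ≤ γ (ε ^ l) + ε)] at hx₃
        have hx₃' : x₃ ∈ Set.Icc (γ (ε ^ l)) (γ (ε ^ l) + ε) := ⟨hx₃.1.le, hx₃.2⟩
        exact integrand_bound3 μ lam T C₄ α₄ ε l s d₁ d₂ d₃ T₁ T₂ γ w hμ hlam hε hs hsε
          hd1 hd2 hd3 hd hT₁ hT₂ hpar hC₄.le x₁ (ε ^ l) x₃ t hx₁'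
          ⟨hεlpos.le, le_rfl⟩ hx₃' htIcc (hγsup (ε ^ l) ⟨hεlpos.le, le_rfl⟩)
          (hbd x₁ hx₁' (ε ^ l) ⟨hεlpos.le, le_rfl⟩ t htIcc)
      calc ‖∫ x₃ in (γ (ε ^ l))..(γ (ε ^ l) + ε),
          (w x₁ (ε ^ l) x₃ t * qd2 (cgo3 μ lam s d₁ d₂ d₃) x₁ (ε ^ l) x₃ t
            - cgo3 μ lam s d₁ d₂ d₃ x₁ (ε ^ l) x₃ t * qd2 w x₁ (ε ^ l) x₃ t)‖
          ≤ B * |γ (ε ^ l) + ε - γ (ε ^ l)| := hinner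
        _ = B * ε := by rw [show γ (ε ^ l) + ε - γ (ε ^ l) = ε by ring, abs_of_pos hε]
    have hf0 : ‖∫ x₁ in (0:ℝ)..ε, ∫ x₃ in (0:ℝ)..ε,
        (w x₁ 0 x₃ t * qd2 (cgo3 μ lam s d₁ d₂ d₃) x₁ 0 x₃ t
          - cgo3 μ lam s d₁ d₂ d₃ x₁ 0 x₃ t * qd2 w x₁ 0 x₃ t)‖ ≤ (B * ε) * |ε - 0| := by
      apply intervalIntegral.norm_integral_le_of_norm_le_const
      intro x₁ hx₁
      rw [Set.uIoc_of_le hε.le] at hx₁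
      have hx₁' : x₁ ∈ Set.Icc (0:ℝ) ε := ⟨hx₁.1.le, hx₁.2⟩
      have hinner : ‖∫ x₃ in (0:ℝ)..ε,
          (w x₁ 0 x₃ t * qd2 (cgo3 μ lam s d₁ d₂ d₃) x₁ 0 x₃ t
            - cgo3 μ lam s d₁ d₂ d₃ x₁ 0 x₃ t * qd2 w x₁ 0 x₃ t)‖ ≤ B * |ε - 0| := by
        apply intervalIntegral.norm_integral_le_of_norm_le_const
        intro x₃ hx₃
        rw [Set.uIoc_of_le hε.le] at hx₃
        have hx₃' : x₃ ∈ Set.Icc (γ 0) (γ 0 + ε) := by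
          rw [hγ0]; exact ⟨by linarith [hx₃.1], by linarith [hx₃.2]⟩
        exact integrand_bound3 μ lam T C₄ α₄ ε l s d₁ d₂ d₃ T₁ T₂ γ w hμ hlam hε hs hsε
          hd1 hd2 hd3 hd hT₁ hT₂ hpar hC₄.le x₁ 0 x₃ t hx₁'
          ⟨le_rfl, hεlpos.le⟩ hx₃' htIcc (by rw [hγ0]; simpa using hε.le)
          (hbd x₁ hx₁' 0 ⟨le_rfl, hεlpos.le⟩ t htIcc)
      calc ‖∫ x₃ in (0:ℝ)..ε,
          (w x₁ 0 x₃ t * qd2 (cgo3 μ lam s d₁ d₂ d₃) x₁ 0 x₃ t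
            - cgo3 μ lam s d₁ d₂ d₃ x₁ 0 x₃ t * qd2 w x₁ 0 x₃ t)‖
          ≤ B * |ε - 0| := hinner
        _ = B * ε := by rw [show ε - (0:ℝ) = ε by ring, abs_of_pos hε]
    have habs : |ε - 0| = ε := by rw [show ε - (0:ℝ) = ε by ring, abs_of_pos hε]
    rw [habs] at hfl hf0
    calc ‖_ - _‖ ≤ (B * ε) * ε + (B * ε) * ε := (norm_sub_le _ _).trans (add_le_add hfl hf0)
      _ = 2 * B * ε ^ 2 := by ring
  have hI := intervalIntegral.norm_integral_le_of_norm_le_const hface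
  rw [show |T₂ - T₁| = ε ^ 2 by rw [hT₂T₁]; exact abs_of_nonneg (by positivity)] at hI
  -- final arithmetic
  rw [norm_mul, Complex.norm_real, Real.norm_eq_abs, abs_of_pos hμ]
  have hmain : μ * ‖∫ t in T₁..T₂,
      ((∫ x₁ in (0:ℝ)..ε, ∫ x₃ in (γ (ε ^ l))..(γ (ε ^ l) + ε),
          (w x₁ (ε ^ l) x₃ t * qd2 (cgo3 μ lam s d₁ d₂ d₃) x₁ (ε ^ l) x₃ t
            - cgo3 μ lam s d₁ d₂ d₃ x₁ (ε ^ l) x₃ t * qd2 w x₁ (ε ^ l) x₃ t))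
        - ∫ x₁ in (0:ℝ)..ε, ∫ x₃ in (0:ℝ)..ε,
          (w x₁ 0 x₃ t * qd2 (cgo3 μ lam s d₁ d₂ d₃) x₁ 0 x₃ t
            - cgo3 μ lam s d₁ d₂ d₃ x₁ 0 x₃ t * qd2 w x₁ 0 x₃ t))‖
      ≤ μ * (2 * B * ε ^ 2 * ε ^ 2) := mul_le_mul_of_nonneg_left hI hμ.le
  refine hmain.trans ?_
  have hmin0 : 0 ≤ min l 1 := le_min hl.le zero_le_one
  have hmin1 : min l 1 ≤ 1 := min_le_right l 1
  -- key exponent estimates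
  have e1 : s * ε ^ 5 ≤ s ^ 2 * ε ^ ((4:ℝ) + l) := by
    have hrw : ε ^ ((4:ℝ) + l) = ε ^ (4:ℕ) * ε ^ l := by
      rw [show ((4:ℝ) + l) = ((4:ℕ):ℝ) + l by norm_num, Real.rpow_add hε, Real.rpow_natCast]
    rw [hrw]
    have h := mul_le_mul_of_nonneg_left hεsl (show (0:ℝ) ≤ s * ε ^ 4 by positivity)
    nlinarith [h]
  have e2 : ε ^ (4:ℕ) ≤ ε ^ ((3:ℝ) + α₄ * min l 1) := by
    have h34 : (3:ℝ) + α₄ * min l 1 ≤ 4 := by nlinarith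
    calc ε ^ (4:ℕ) = ε ^ (((4:ℕ):ℝ)) := (Real.rpow_natCast ε 4).symm
      _ ≤ ε ^ ((3:ℝ) + α₄ * min l 1) :=
        Real.rpow_le_rpow_of_exponent_ge hε hε1.le (by push_cast; linarith)
  have n1 : (0:ℝ) ≤ s ^ 2 * ε ^ ((4:ℝ) + l) :=
    mul_nonneg (by positivity) (Real.rpow_nonneg hε.le _)
  have n2 : (0:ℝ) ≤ s ^ 2 * ε ^ ((3:ℝ) + l + (1 + α₄) * min l 1) :=
    mul_nonneg (by positivity) (Real.rpow_nonneg hε.le _)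
  have n3 : (0:ℝ) ≤ ε ^ ((3:ℝ) + α₄ * min l 1) := Real.rpow_nonneg hε.le _
  have n4 : (0:ℝ) ≤ s ^ 3 * ε ^ ((4:ℝ) + 2 * l) :=
    mul_nonneg (by positivity) (Real.rpow_nonneg hε.le _)
  have n5 : (0:ℝ) ≤ s * ε ^ ((4:ℝ) + α₄ * min l 1) :=
    mul_nonneg (by positivity) (Real.rpow_nonneg hε.le _)
  have ha : (0:ℝ) ≤ 2 * μ * C₄ * K₀ := by positivity
  have key1 : μ * (2 * B * ε ^ 2 * ε ^ 2)
      = (2 * μ * C₄ * K₀) * K₁ * (s * ε ^ 5) + (2 * μ * C₄ * K₀) * ε ^ (4:ℕ) := by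
    rw [hB]; ring
  rw [key1]
  have key2 : (2 * μ * C₄ * K₀) * K₁ * (s * ε ^ 5)
      ≤ (2 * μ * C₄ * K₀) * K₁ * (s ^ 2 * ε ^ ((4:ℝ) + l)) :=
    mul_le_mul_of_nonneg_left e1 (by positivity)
  have key3 : (2 * μ * C₄ * K₀) * ε ^ (4:ℕ)
      ≤ (2 * μ * C₄ * K₀) * ε ^ ((3:ℝ) + α₄ * min l 1) :=
    mul_le_mul_of_nonneg_left e2 ha
  have final : (2 * μ * C₄ * K₀) * K₁ * (s ^ 2 * ε ^ ((4:ℝ) + l))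
      + (2 * μ * C₄ * K₀) * ε ^ ((3:ℝ) + α₄ * min l 1)
      ≤ 2 * μ * C₄ * K₀ * (K₁ + 1) * (s ^ 2 * ε ^ ((4:ℝ) + l)
        + s ^ 2 * ε ^ ((3:ℝ) + l + (1 + α₄) * min l 1) + ε ^ ((3:ℝ) + α₄ * min l 1)
        + s ^ 3 * ε ^ ((4:ℝ) + 2 * l) + s * ε ^ ((4:ℝ) + α₄ * min l 1)) := by
    set A : ℝ := 2 * μ * C₄ * K₀ * (K₁ + 1) with hA
    have hAnn : (0:ℝ) ≤ A := by positivity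
    have g1 : (2 * μ * C₄ * K₀) * K₁ * (s ^ 2 * ε ^ ((4:ℝ) + l)) ≤ A * (s ^ 2 * ε ^ ((4:ℝ) + l)) := by
      apply mul_le_mul_of_nonneg_right _ n1
      rw [hA]; nlinarith
    have g3 : (2 * μ * C₄ * K₀) * ε ^ ((3:ℝ) + α₄ * min l 1) ≤ A * ε ^ ((3:ℝ) + α₄ * min l 1) := by
      apply mul_le_mul_of_nonneg_right _ n3
      rw [hA]; nlinarith
    have expand : A * (s ^ 2 * ε ^ ((4:ℝ) + l)
        + s ^ 2 * ε ^ ((3:ℝ) + l + (1 + α₄) * min l 1) + ε ^ ((3:ℝ) + α₄ * min l 1)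
        + s ^ 3 * ε ^ ((4:ℝ) + 2 * l) + s * ε ^ ((4:ℝ) + α₄ * min l 1))
        = A * (s ^ 2 * ε ^ ((4:ℝ) + l)) + A * (s ^ 2 * ε ^ ((3:ℝ) + l + (1 + α₄) * min l 1))
          + A * ε ^ ((3:ℝ) + α₄ * min l 1) + A * (s ^ 3 * ε ^ ((4:ℝ) + 2 * l))
          + A * (s * ε ^ ((4:ℝ) + α₄ * min l 1)) := by ring
    rw [expand]
    have p2 : 0 ≤ A * (s ^ 2 * ε ^ ((3:ℝ) + l + (1 + α₄) * min l 1)) := mul_nonneg hAnn n2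
    have p4 : 0 ≤ A * (s ^ 3 * ε ^ ((4:ℝ) + 2 * l)) := mul_nonneg hAnn n4
    have p5 : 0 ≤ A * (s * ε ^ ((4:ℝ) + α₄ * min l 1)) := mul_nonneg hAnn n5
    linarith
  linarith [key2, key3, final]
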